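/- For all integers g,s,t≥1 there exists an integer N≥1 with the following property: if G is a (K_{s,s},K_t)-free graph and A,B⊆V(G) are disjoint sets each of cardinality N, then there exist stable sets S1⊆A and S2⊆B, each of cardinality g, such that S1 is anticomplete to S2. -/

import Mathlib

/-- `G` is `H`-free: no induced subgraph of `G` is isomorphic to `H`. -/
def Free {V W : Type} (G : SimpleGraph V) (H : SimpleGraph W) : Prop :=
  IsEmpty (H ↪g G)

/-- A graph is chordal if it has no induced cycle on at least four vertices. -/
def Chordal {V : Type} (G : SimpleGraph V) : Prop :=
  ∀ n : ℕ, 4 ≤ n → IsEmpty (SimpleGraph.cycleGraph n ↪g G)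

/-- A graph is even-hole-free if it has no induced cycle on an even number (at least four)
of vertices. -/
def EvenHoleFree {V : Type} (G : SimpleGraph V) : Prop :=
  ∀ n : ℕ, 4 ≤ n → Even n → IsEmpty (SimpleGraph.cycleGraph n ↪g G)

/-- `cone F` is obtained from `F` by adding a universal vertex (the vertex `none`). -/
def cone {V : Type} (F : SimpleGraph V) : SimpleGraph (Option V) :=
  SimpleGraph.fromRel (fun u v => u = none ∨ ∃ a b, u = some a ∧ v = some b ∧ F.Adj a b)

section StmtAux
open Finset

lemma ramsey_aux : ∀ t m : ℕ, ∃ n : ℕ, ∀ {V : Type} (G : SimpleGraph V) (A : Finset V),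
    n ≤ A.card →
    (∃ C ⊆ A, C.card = t ∧ ∀ u ∈ C, ∀ v ∈ C, u ≠ v → G.Adj u v) ∨
    (∃ S ⊆ A, S.card = m ∧ ∀ u ∈ S, ∀ v ∈ S, ¬ G.Adj u v) := by
  intro t
  induction t with
  | zero =>
    intro m
    exact ⟨0, fun G A _ => Or.inl ⟨∅, empty_subset _, card_empty, by simp⟩⟩
  | succ t iht =>
    intro m
    induction m with
    | zero =>
      exact ⟨0, fun G A _ => Or.inr ⟨∅, empty_subset _, card_empty, by simp⟩⟩
    | succ m ihm =>
      obtain ⟨n1, h1⟩ := iht (m + 1)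
      obtain ⟨n2, h2⟩ := ihm
      refine ⟨n1 + n2 + 1, fun {V} G A hA => ?_⟩
      classical
      have hA0 : 0 < A.card := by omega
      obtain ⟨v, hv⟩ := card_pos.mp hA0
      set N := (A.erase v).filter (fun u => G.Adj v u) with hNdef
      set M := (A.erase v).filter (fun u => ¬ G.Adj v u) with hMdef
      have hcard : N.card + M.card = A.card - 1 := by
        rw [hNdef, hMdef, card_filter_add_card_filter_not, card_erase_of_mem hv]
      have hNsub : N ⊆ A.erase v := filter_subset _ _
      have hMsub : M ⊆ A.erase v := filter_subset _ _
      by_cases hc : n1 ≤ N.card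
      · rcases h1 G N hc with ⟨C, hCsub, hCcard, hCcl⟩ | ⟨S, hSsub, hScard, hSst⟩
        · left
          have hvC : v ∉ C := fun h => notMem_erase v A (hNsub (hCsub h))
          refine ⟨insert v C, ?_, ?_, ?_⟩
          · intro x hx
            rcases mem_insert.mp hx with rfl | hx
            · exact hv
            · exact mem_of_mem_erase (hNsub (hCsub hx))
          · rw [card_insert_of_notMem hvC, hCcard]
          · have hadjall : ∀ u ∈ C, G.Adj v u := fun u hu => (mem_filter.mp (hCsub hu)).2
            intro x hx y hy hxy
            rcases mem_insert.mp hx with hx | hx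
            · rcases mem_insert.mp hy with hy | hy
              · exact absurd (hx.trans hy.symm) hxy
              · exact hx ▸ hadjall y hy
            · rcases mem_insert.mp hy with hy | hy
              · exact hy ▸ (hadjall x hx).symm
              · exact hCcl x hx y hy hxy
        · exact Or.inr ⟨S, hSsub.trans (hNsub.trans (erase_subset v A)), hScard, hSst⟩
      · have hc2 : n2 ≤ M.card := by omega
        rcases h2 G M hc2 with ⟨C, hCsub, hCcard, hCcl⟩ | ⟨S, hSsub, hScard, hSst⟩
        · exact Or.inl ⟨C, hCsub.trans (hMsub.trans (erase_subset v A)), hCcard, hCcl⟩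
        · right
          have hvS : v ∉ S := fun h => notMem_erase v A (hMsub (hSsub h))
          refine ⟨insert v S, ?_, ?_, ?_⟩
          · intro x hx
            rcases mem_insert.mp hx with rfl | hx
            · exact hv
            · exact mem_of_mem_erase (hMsub (hSsub hx))
          · rw [card_insert_of_notMem hvS, hScard]
          · have hnonall : ∀ u ∈ S, ¬ G.Adj v u := fun u hu => (mem_filter.mp (hSsub hu)).2
            intro x hx y hy
            rcases mem_insert.mp hx with hx | hx
            · rcases mem_insert.mp hy with hy | hy
              · exact hx ▸ hy ▸ G.loopless.irrefl v
              · exact hx ▸ hnonall y hy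
            · rcases mem_insert.mp hy with hy | hy
              · exact hy ▸ fun h => hnonall x hx h.symm
              · exact hSst x hx y hy

/-- From `K_t`-freeness and Ramsey, extract a stable set of prescribed size. -/
lemma stable_aux (t m : ℕ) : ∃ n : ℕ, ∀ {V : Type} (G : SimpleGraph V),
    IsEmpty ((⊤ : SimpleGraph (Fin t)) ↪g G) → ∀ A : Finset V, n ≤ A.card →
    ∃ S ⊆ A, S.card = m ∧ ∀ u ∈ S, ∀ v ∈ S, ¬ G.Adj u v := by
  obtain ⟨n, hn⟩ := ramsey_aux t m
  refine ⟨n, fun {V} G hfree A hA => ?_⟩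
  rcases hn G A hA with ⟨C, _, hCcard, hCcl⟩ | hS
  · exfalso
    have hcf : G.CliqueFree t := SimpleGraph.cliqueFree_iff.mpr ⟨fun c => hfree.false (SimpleGraph.Copy.topEmbedding c)⟩
    exact hcf C ⟨(G.isClique_iff).mpr (fun x hx y hy hxy => hCcl x hx y hy hxy), hCcard⟩
  · exact hS

lemma bip_aux (k : ℕ) : ∀ {V : Type} (G : SimpleGraph V) (A B : Finset V),
    2 * k ≤ A.card → 2 ^ (2 * k) * k ≤ B.card →
    ∃ X ⊆ A, ∃ Y ⊆ B, X.card = k ∧ Y.card = k ∧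
      ((∀ u ∈ X, ∀ v ∈ Y, G.Adj u v) ∨ (∀ u ∈ X, ∀ v ∈ Y, ¬ G.Adj u v)) := by
  intro V G A B hA hB
  classical
  obtain ⟨A', hA'sub, hA'card⟩ := A.exists_subset_card_eq hA
  have hmap : ∀ v ∈ B, (A'.filter fun u => G.Adj v u) ∈ A'.powerset :=
    fun v _ => mem_powerset.mpr (filter_subset _ _)
  have hpow : A'.powerset.card * k ≤ B.card := by
    rw [card_powerset, hA'card]; exact hB
  obtain ⟨N0, hN0, hfib⟩ := exists_le_card_fiber_of_mul_le_card_of_maps_to hmap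
    ⟨∅, empty_mem_powerset _⟩ hpow
  obtain ⟨Y, hYsub, hYcard⟩ := Finset.exists_subset_card_eq hfib
  have hYB : Y ⊆ B := hYsub.trans (filter_subset _ _)
  have hN0sub : N0 ⊆ A' := mem_powerset.mp hN0
  have hkey : ∀ v ∈ Y, ∀ u ∈ A', (G.Adj v u ↔ u ∈ N0) := by
    intro v hvY u huA'
    have heq := (mem_filter.mp (hYsub hvY)).2
    constructor
    · intro h; rw [← heq]; exact mem_filter.mpr ⟨huA', h⟩
    · intro h; rw [← heq] at h; exact (mem_filter.mp h).2
  by_cases hc : k ≤ N0.card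
  · obtain ⟨X, hXsub, hXcard⟩ := N0.exists_subset_card_eq hc
    refine ⟨X, (hXsub.trans hN0sub).trans hA'sub, Y, hYB, hXcard, hYcard, Or.inl ?_⟩
    intro u hu v hv
    exact ((hkey v hv u (hN0sub (hXsub hu))).mpr (hXsub hu)).symm
  · have hsd : k ≤ (A' \ N0).card := by
      have := card_sdiff_of_subset hN0sub
      have := card_le_card hN0sub
      omega
    obtain ⟨X, hXsub, hXcard⟩ := (A' \ N0).exists_subset_card_eq hsd
    refine ⟨X, (hXsub.trans sdiff_subset).trans hA'sub, Y, hYB, hXcard, hYcard, Or.inr ?_⟩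
    intro u hu v hv hadj
    have hmem := hXsub hu
    have : u ∈ N0 := (hkey v hv u (sdiff_subset hmem)).mp hadj.symm
    exact (mem_sdiff.mp hmem).2 this

end StmtAux

open Finset in
private theorem stmt14_impl (g s t : ℕ) (hg : 1 ≤ g) (hs : 1 ≤ s) (ht : 1 ≤ t) :
    ∃ N : ℕ, 1 ≤ N ∧ ∀ {V : Type} (G : SimpleGraph V),
      IsEmpty ((completeBipartiteGraph (Fin s) (Fin s)) ↪g G) →
      IsEmpty ((⊤ : SimpleGraph (Fin t)) ↪g G) →
      ∀ A B : Finset V, Disjoint A B → A.card = N → B.card = N →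
      ∃ S1 S2 : Finset V, S1 ⊆ A ∧ S2 ⊆ B ∧ S1.card = g ∧ S2.card = g ∧
        (∀ u ∈ S1, ∀ v ∈ S1, ¬ G.Adj u v) ∧
        (∀ u ∈ S2, ∀ v ∈ S2, ¬ G.Adj u v) ∧
        (∀ u ∈ S1, ∀ v ∈ S2, ¬ G.Adj u v) := by
  classical
  set k := max s g with hk
  obtain ⟨n1, hn1⟩ := stable_aux t (2 * k)
  obtain ⟨n2, hn2⟩ := stable_aux t (2 ^ (2 * k) * k)
  refine ⟨max 1 (max n1 n2), le_max_left _ _, ?_⟩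
  intro V G hKss hKt A B hdisj hAcard hBcard
  have hA1 : n1 ≤ A.card := by
    rw [hAcard]; exact le_trans (le_max_left n1 n2) (le_max_right 1 _)
  have hB2 : n2 ≤ B.card := by
    rw [hBcard]; exact le_trans (le_max_right n1 n2) (le_max_right 1 _)
  obtain ⟨SA, hSAsub, hSAcard, hSAst⟩ := hn1 G hKt A hA1
  obtain ⟨SB, hSBsub, hSBcard, hSBst⟩ := hn2 G hKt B hB2
  obtain ⟨X, hXsub, Y, hYsub, hXcard, hYcard, hcase⟩ :=
    bip_aux k G SA SB (le_of_eq hSAcard.symm) (le_of_eq hSBcard.symm)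
  have hXA : X ⊆ A := hXsub.trans hSAsub
  have hYB : Y ⊆ B := hYsub.trans hSBsub
  rcases hcase with hcomp | hanti
  · exfalso
    have hsk : s ≤ k := le_max_left s g
    obtain ⟨X', hX'sub, hX'card⟩ := X.exists_subset_card_eq
      (show s ≤ X.card by rw [hXcard]; exact hsk)
    obtain ⟨Y', hY'sub, hY'card⟩ := Y.exists_subset_card_eq
      (show s ≤ Y.card by rw [hYcard]; exact hsk)
    let eX := X'.equivFinOfCardEq hX'card
    let eY := Y'.equivFinOfCardEq hY'card
    let f : Fin s ⊕ Fin s → V :=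
      Sum.elim (fun i => ((eX.symm i : {x // x ∈ X'}) : V))
        (fun j => ((eY.symm j : {x // x ∈ Y'}) : V))
    have hfX : ∀ i, f (Sum.inl i) ∈ X' := fun i => (eX.symm i).2
    have hfY : ∀ j, f (Sum.inr j) ∈ Y' := fun j => (eY.symm j).2
    have hinj : Function.Injective f := by
      rintro (i | i) (j | j) h
      · have : eX.symm i = eX.symm j := Subtype.ext h
        exact congrArg Sum.inl (eX.symm.injective this)
      · have h1 : f (Sum.inl i) ∈ A := hXA (hX'sub (hfX i))
        have h2 : f (Sum.inr j) ∈ B := hYB (hY'sub (hfY j))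
        rw [h] at h1
        exact absurd h2 (Finset.disjoint_left.mp hdisj h1)
      · have h1 : f (Sum.inl j) ∈ A := hXA (hX'sub (hfX j))
        have h2 : f (Sum.inr i) ∈ B := hYB (hY'sub (hfY i))
        rw [h] at h2
        exact absurd h2 (Finset.disjoint_left.mp hdisj h1)
      · have : eY.symm i = eY.symm j := Subtype.ext h
        exact congrArg Sum.inr (eY.symm.injective this)
    have hadj : ∀ a b, G.Adj (f a) (f b) ↔ (completeBipartiteGraph (Fin s) (Fin s)).Adj a b := by
      rintro (i | i) (j | j)
      · exact iff_of_false (hSAst _ (hXsub (hX'sub (hfX i))) _ (hXsub (hX'sub (hfX j))))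
          (by simp [completeBipartiteGraph])
      · exact iff_of_true (hcomp _ (hX'sub (hfX i)) _ (hY'sub (hfY j)))
          (by simp [completeBipartiteGraph])
      · exact iff_of_true (hcomp _ (hX'sub (hfX j)) _ (hY'sub (hfY i))).symm
          (by simp [completeBipartiteGraph])
      · exact iff_of_false (hSBst _ (hYsub (hY'sub (hfY i))) _ (hYsub (hY'sub (hfY j))))
          (by simp [completeBipartiteGraph])
    exact hKss.false ⟨⟨f, hinj⟩, hadj _ _⟩
  · have hgk : g ≤ k := le_max_right s g
    obtain ⟨S1, hS1sub, hS1card⟩ := X.exists_subset_card_eq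
      (show g ≤ X.card by rw [hXcard]; exact hgk)
    obtain ⟨S2, hS2sub, hS2card⟩ := Y.exists_subset_card_eq
      (show g ≤ Y.card by rw [hYcard]; exact hgk)
    refine ⟨S1, S2, hS1sub.trans hXA, hS2sub.trans hYB, hS1card, hS2card, ?_, ?_, ?_⟩
    · exact fun u hu v hv => hSAst u (hXsub (hS1sub hu)) v (hXsub (hS1sub hv))
    · exact fun u hu v hv => hSBst u (hYsub (hS2sub hu)) v (hYsub (hS2sub hv))
    · exact fun u hu v hv => hanti u (hS1sub hu) v (hS2sub hv)

/-- For all `g, s, t ≥ 1` there is `N ≥ 1` such that in every `(K_{s,s}, K_t)`-free graph,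
any two disjoint `N`-sets `A, B` contain stable `g`-sets `S1 ⊆ A`, `S2 ⊆ B` that are
anticomplete to each other. -/
theorem stmt14 (g s t : ℕ) (hg : 1 ≤ g) (hs : 1 ≤ s) (ht : 1 ≤ t) :
    ∃ N : ℕ, 1 ≤ N ∧ ∀ {V : Type} (G : SimpleGraph V),
      Free G (completeBipartiteGraph (Fin s) (Fin s)) →
      Free G (⊤ : SimpleGraph (Fin t)) →
      ∀ A B : Finset V, Disjoint A B → A.card = N → B.card = N →
      ∃ S1 S2 : Finset V, S1 ⊆ A ∧ S2 ⊆ B ∧ S1.card = g ∧ S2.card = g ∧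
        (∀ u ∈ S1, ∀ v ∈ S1, ¬ G.Adj u v) ∧
        (∀ u ∈ S2, ∀ v ∈ S2, ¬ G.Adj u v) ∧
        (∀ u ∈ S1, ∀ v ∈ S2, ¬ G.Adj u v) := by
  exact stmt14_impl g s t hg hs ht
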